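/- The graph 5K₂ + K₄ (the join of the disjoint union of five copies of K₂ with K₄) is 4-connected with κ = 4 and δ = 5, has a cycle of length exactly 4δ − 2κ = 12 but no cycle of length 4δ − 2κ + 1 = 13, and has no dominating cycle. -/

import Mathlib

open SimpleGraph

/-- `S` is a cut-set: removing `S` leaves a disconnected or trivial graph. -/
def IsCutSet {V : Type*} (G : SimpleGraph V) (S : Set V) : Prop :=
  ¬ (G.induce Sᶜ).Connected ∨ Sᶜ.Subsingleton

/-- The connectivity `κ` of `G`. -/
noncomputable def kappa {V : Type*} (G : SimpleGraph V) : ℕ :=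
  sInf {k | ∃ S : Set V, S.ncard = k ∧ IsCutSet G S}

/-- The graph `5K₂ + K₄`: five disjoint edges (vertices `Sum.inl i`, paired by `i / 2`)
joined completely to a `K₄` (vertices `Sum.inr j`). -/
def G19 : SimpleGraph (Fin 10 ⊕ Fin 4) :=
  SimpleGraph.fromRel (fun a b =>
    match a, b with
    | Sum.inl i, Sum.inl j => i.val / 2 = j.val / 2
    | _, _ => True)

noncomputable instance : DecidableRel G19.Adj := Classical.decRel _

/-! ### Auxiliary material -/

set_option linter.unnecessarySeqFocus false

def adjB : (Fin 10 ⊕ Fin 4) → (Fin 10 ⊕ Fin 4) → Bool :=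
  fun a b => !(decide (a = b)) && (match a, b with
    | Sum.inl i, Sum.inl j => decide (i.val / 2 = j.val / 2)
    | _, _ => true)

lemma adj_iff (a b : Fin 10 ⊕ Fin 4) : G19.Adj a b ↔ adjB a b = true := by
  cases a <;> cases b <;>
    simp [G19, adjB, SimpleGraph.fromRel_adj] <;> tauto

def decAdj : DecidableRel G19.Adj := fun a b => decidable_of_iff _ (adj_iff a b).symm

lemma minDeg5 : @SimpleGraph.minDegree _ G19 _ decAdj = 5 := by decide

lemma adj_inl_inl {a b : Fin 10} :
    G19.Adj (Sum.inl a) (Sum.inl b) ↔ a ≠ b ∧ a.val / 2 = b.val / 2 := by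
  rw [adj_iff]; simp [adjB]

lemma adj_inr {a : Fin 10 ⊕ Fin 4} {j : Fin 4} (h : a ≠ Sum.inr j) :
    G19.Adj a (Sum.inr j) := by
  rw [adj_iff]; cases a <;> simp_all [adjB]

lemma pair_eq {a b c : Fin 10} (hab : a ≠ b) (h1 : a.val / 2 = b.val / 2)
    (hcb : c ≠ b) (h2 : c.val / 2 = b.val / 2) : c = a := by
  have ha := a.isLt; have hb := b.isLt; have hc := c.isLt
  have hab' : a.val ≠ b.val := fun h => hab (Fin.ext h)
  have hcb' : c.val ≠ b.val := fun h => hcb (Fin.ext h)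
  exact Fin.ext (by omega)

/-- The core combinatorial lemma, for an abstract "cyclic sequence" in `G19`. -/
lemma cycle_struct {n : ℕ} (hn : 3 ≤ n) (v : ZMod n → Fin 10 ⊕ Fin 4)
    (hinj : Function.Injective v) (hadj : ∀ i, G19.Adj (v i) (v (i + 1))) :
    n ≤ 12 ∧ ((∀ j : Fin 4, ∃ i, v i = Sum.inr j) →
      ∃ a b : Fin 10, a ≠ b ∧ a.val / 2 = b.val / 2 ∧
        (∀ i, v i ≠ Sum.inl a) ∧ (∀ i, v i ≠ Sum.inl b)) := by
  classical
  haveI : NeZero n := ⟨by omega⟩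
  have htwo : ∀ i : ZMod n, i + 2 ≠ i := by
    intro i h
    have h0 : (2 : ZMod n) = 0 := by
      have := h.trans (add_zero i).symm
      rw [add_comm i 2, add_comm i 0] at this
      exact add_right_cancel this
    have h2 : ((2 : ℕ) : ZMod n) = 0 := by push_cast; exact h0
    have := (ZMod.natCast_eq_zero_iff 2 n).mp h2
    have := Nat.le_of_dvd (by norm_num) this
    omega
  have star : ∀ (i : ZMod n) (a b : Fin 10), v i = Sum.inl a → v (i + 1) = Sum.inl b →
      ∃ j, v (i + 2) = Sum.inr j := by
    intro i a b ha hb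
    have h1 := hadj i; rw [ha, hb, adj_inl_inl] at h1
    have h2 := hadj (i + 1)
    have e12 : i + 1 + 1 = i + 2 := by ring
    rw [e12] at h2
    match hc : v (i + 2) with
    | Sum.inr j => exact ⟨j, rfl⟩
    | Sum.inl c =>
      rw [hb, hc, adj_inl_inl] at h2
      have hca : c = a := pair_eq h1.1 h1.2 h2.1.symm h2.2.symm
      exfalso
      apply htwo i
      apply hinj
      rw [hc, hca, ha]
  set B : Finset (ZMod n) := Finset.univ.filter (fun i => (v i).isRight) with hBdef
  have hBmem : ∀ i, i ∈ B ↔ ∃ j, v i = Sum.inr j := by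
    intro i; simp [hBdef, Sum.isRight_iff]
  have hBcard : B.card ≤ 4 := by
    have h : B.card ≤ (Finset.univ : Finset (Fin 4)).card := by
      apply Finset.card_le_card_of_injOn (fun i => Sum.elim (fun _ => (0 : Fin 4)) id (v i))
        (fun _ _ => Finset.mem_univ _)
      intro i hi i' hi' h
      obtain ⟨j, hj⟩ := (hBmem i).mp hi
      obtain ⟨j', hj'⟩ := (hBmem i').mp hi'
      simp only [hj, hj', Sum.elim_inr, id] at h
      have hvv : v i = v i' := by rw [hj, hj', h]
      exact hinj hvv
    simpa using h
  set A : Finset (ZMod n) := Finset.univ.filter (fun i => (v i).isLeft) with hAdef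
  have hAmem : ∀ i, i ∈ A ↔ ∃ a, v i = Sum.inl a := by
    intro i; simp [hAdef, Sum.isLeft_iff]
  have hAB : A.card + B.card = n := by
    have hB' : B = Finset.univ.filter (fun i => ¬ (v i).isLeft) := by
      ext i; cases h : v i <;> simp [hBdef, h]
    rw [hAdef, hB', Finset.card_filter_add_card_filter_not, Finset.card_univ, ZMod.card]
  have hAcard : A.card ≤ 8 := by
    have h1 : A.card ≤ (B ×ˢ (Finset.univ : Finset Bool)).card := by
      apply Finset.card_le_card_of_injOn
        (fun i => if (v (i + 1)).isRight then (i + 1, false) else (i + 2, true))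
      · intro i hi
        obtain ⟨a, ha⟩ := (hAmem i).mp hi
        by_cases h : (v (i + 1)).isRight
        · obtain ⟨j, hj⟩ := Sum.isRight_iff.mp h
          simp only [h, if_true, Finset.mem_coe, Finset.mem_product, Finset.mem_univ, and_true]
          exact (hBmem _).mpr ⟨j, hj⟩
        · obtain ⟨b, hb⟩ := Sum.isLeft_iff.mp (Sum.not_isRight.mp h)
          obtain ⟨j, hj⟩ := star i a b ha hb
          simp only [h, if_false, Finset.mem_coe, Finset.mem_product, Finset.mem_univ, and_true]
          exact (hBmem _).mpr ⟨j, hj⟩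
      · intro i hi i' hi' h
        simp only at h
        split_ifs at h with h1 h2 h2 <;> rw [Prod.mk.injEq] at h
        · exact add_right_cancel h.1
        · exact absurd h.2 (by simp)
        · exact absurd h.2 (by simp)
        · exact add_right_cancel h.1
    have h2 : (B ×ˢ (Finset.univ : Finset Bool)).card = B.card * 2 := by
      simp [Finset.card_product]
    omega
  refine ⟨by omega, ?_⟩
  intro hall
  by_contra hcon
  push_neg at hcon
  have key : ∀ p : Fin 5, ∃ j : Fin 4, ∃ (k : ZMod n) (c : Fin 10),
      v k = Sum.inr j ∧ v (k - 1) = Sum.inl c ∧ c.val / 2 = p.val := by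
    intro p
    have hex : ∃ (i : ZMod n) (a : Fin 10), v i = Sum.inl a ∧ a.val / 2 = p.val := by
      have hp4 := p.isLt
      set a0 : Fin 10 := ⟨2 * p.val, by omega⟩ with ha0
      set a1 : Fin 10 := ⟨2 * p.val + 1, by omega⟩ with ha1
      have hne : a0 ≠ a1 :=
        Fin.ne_of_val_ne (by show 2 * p.val ≠ 2 * p.val + 1; omega)
      have hp2 : a0.val / 2 = a1.val / 2 := by
        show 2 * p.val / 2 = (2 * p.val + 1) / 2; omega
      by_cases h : ∀ i, v i ≠ Sum.inl a0
      · obtain ⟨i, hi⟩ := hcon a0 a1 hne hp2 h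
        exact ⟨i, a1, hi, by show (2 * p.val + 1) / 2 = p.val; omega⟩
      · push_neg at h; obtain ⟨i, hi⟩ := h
        exact ⟨i, a0, hi, by show 2 * p.val / 2 = p.val; omega⟩
    obtain ⟨i, a, ha, hap⟩ := hex
    match hb : v (i + 1) with
    | Sum.inr j =>
      refine ⟨j, i + 1, a, hb, ?_, hap⟩
      have e : i + 1 - 1 = i := by ring
      rw [e, ha]
    | Sum.inl b =>
      obtain ⟨j, hj⟩ := star i a b ha hb
      have hadj1 := hadj i; rw [ha, hb, adj_inl_inl] at hadj1
      refine ⟨j, i + 2, b, hj, ?_, by omega⟩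
      have e : i + 2 - 1 = i + 1 := by ring
      rw [e, hb]
  have hFinj : Function.Injective (fun p : Fin 5 => (key p).choose) := by
    intro p q h
    obtain ⟨k, c, hk, hc, hcp⟩ := (key p).choose_spec
    obtain ⟨k', c', hk', hc', hcq⟩ := (key q).choose_spec
    simp only at h
    rw [h] at hk
    have hkk : k = k' := hinj (hk.trans hk'.symm)
    rw [hkk] at hc
    have hcc : c = c' := Sum.inl.inj (hc.symm.trans hc')
    rw [hcc] at hcp
    exact Fin.ext (by omega)
  have hcard := Fintype.card_le_of_injective _ hFinj
  rw [Fintype.card_fin, Fintype.card_fin] at hcard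
  omega

/-- Bridge: a cycle in `G19` gives a cyclic sequence. -/
lemma cycle_to_fn {x : Fin 10 ⊕ Fin 4} (C : G19.Walk x x) (hC : C.IsCycle) :
    ∃ v : ZMod C.length → Fin 10 ⊕ Fin 4, Function.Injective v ∧
      (∀ i, G19.Adj (v i) (v (i + 1))) ∧
      (∀ a, a ∈ C.support → ∃ i, v i = a) := by
  have hn : 3 ≤ C.length := hC.three_le_length
  haveI : NeZero C.length := ⟨by omega⟩
  set n := C.length with hndef
  set l := C.support.tail with hl
  have hlen : l.length = n := by
    have h := C.length_support
    simp only [hl, List.length_tail, h]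
    omega
  have hlnil : l ≠ [] := by
    intro h; rw [h] at hlen; simp at hlen; omega
  have hnodup : l.Nodup := hC.support_nodup
  have hchain : List.Chain' G19.Adj (x :: l) := by
    have h := C.isChain_adj_support
    rwa [C.support_eq_cons] at h
  have hlast : l.getLast hlnil = x := by
    have h2 : C.support.tail.getLast hlnil = x := by
      rw [List.getLast_tail]
      exact C.getLast_support
    exact h2
  have hgetD : ∀ (k : ℕ) (hk : k < n), l.getD k x = l[k]'(by rw [hlen]; exact hk) :=
    fun k hk => List.getD_eq_getElem l x _
  refine ⟨fun i => l.getD i.val x, ?_, ?_, ?_⟩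
  · intro i i' h
    simp only [hgetD _ i.val_lt, hgetD _ i'.val_lt] at h
    have := (hnodup.getElem_inj_iff).mp h
    exact ZMod.val_injective n this
  · intro i
    have hcg := List.isChain_iff_getElem.mp hchain
    have hk : i.val < n := i.val_lt
    have hsucc : (i + 1).val = (i.val + 1) % n := by
      rw [ZMod.val_add, ZMod.val_one'' (by omega)]
    show G19.Adj (l.getD i.val x) (l.getD (i + 1).val x)
    by_cases hk1 : i.val + 1 < n
    · have hs : (i + 1).val = i.val + 1 := by rw [hsucc]; exact Nat.mod_eq_of_lt hk1
      rw [hs, hgetD _ hk, hgetD _ hk1]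
      have h := hcg (i.val + 1) (by simp [hlen]; omega)
      simpa using h
    · have hkn : i.val + 1 = n := by omega
      have hs : (i + 1).val = 0 := by rw [hsucc, hkn, Nat.mod_self]
      rw [hs, hgetD _ hk, hgetD 0 (by omega)]
      have hx : l[i.val]'(by rw [hlen]; exact hk) = x := by
        rw [← hlast, List.getLast_eq_getElem]
        congr 1
        omega
      rw [hx]
      have h := hcg 0 (by simp [hlen]; omega)
      simpa using h
  · intro a ha
    rw [C.support_eq_cons] at ha
    rcases List.mem_cons.mp ha with heq | hmem
    · refine ⟨((n - 1 : ℕ) : ZMod n), ?_⟩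
      show l.getD (((n - 1 : ℕ) : ZMod n)).val x = a
      have hv : (((n - 1 : ℕ) : ZMod n)).val = n - 1 := ZMod.val_cast_of_lt (by omega)
      have hgl : l[n - 1]'(by rw [hlen]; omega) = x := by
        conv_rhs => rw [← hlast]
        rw [List.getLast_eq_getElem]
        congr 1
        omega
      rw [heq, hv, hgetD _ (by omega), hgl]
    · obtain ⟨k, hk, hget⟩ := List.mem_iff_getElem.mp hmem
      have hk2 : k < l.length := hk
      have hk' : k < n := by rw [← hlen]; exact hk2
      refine ⟨((k : ℕ) : ZMod n), ?_⟩
      show l.getD (((k : ℕ) : ZMod n)).val x = a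
      have hv : (((k : ℕ) : ZMod n)).val = k := ZMod.val_cast_of_lt (by omega)
      rw [hv, hgetD _ hk']
      exact hget

/-- The explicit 12-cycle. -/
def cyc12 : G19.Walk (Sum.inr 0) (Sum.inr 0) :=
  Walk.cons (v := Sum.inl 0) ((adj_iff _ _).mpr (by decide)) <|
  Walk.cons (v := Sum.inl 1) ((adj_iff _ _).mpr (by decide)) <|
  Walk.cons (v := Sum.inr 1) ((adj_iff _ _).mpr (by decide)) <|
  Walk.cons (v := Sum.inl 2) ((adj_iff _ _).mpr (by decide)) <|
  Walk.cons (v := Sum.inl 3) ((adj_iff _ _).mpr (by decide)) <|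
  Walk.cons (v := Sum.inr 2) ((adj_iff _ _).mpr (by decide)) <|
  Walk.cons (v := Sum.inl 4) ((adj_iff _ _).mpr (by decide)) <|
  Walk.cons (v := Sum.inl 5) ((adj_iff _ _).mpr (by decide)) <|
  Walk.cons (v := Sum.inr 3) ((adj_iff _ _).mpr (by decide)) <|
  Walk.cons (v := Sum.inl 6) ((adj_iff _ _).mpr (by decide)) <|
  Walk.cons (v := Sum.inl 7) ((adj_iff _ _).mpr (by decide)) <|
  Walk.cons (v := Sum.inr 0) ((adj_iff _ _).mpr (by decide)) Walk.nil

lemma cyc12_isCycle : cyc12.IsCycle := by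
  rw [Walk.isCycle_def, Walk.isTrail_def]
  refine ⟨?_, by simp [cyc12], ?_⟩
  · simp only [cyc12, Walk.edges_cons, Walk.edges_nil]
    decide
  · simp only [cyc12, Walk.support_cons, Walk.support_nil, List.tail_cons]
    decide

lemma cyc12_length : cyc12.length = 12 := rfl

/-- `G19` is connected after removing any set missing some `K₄` vertex. -/
lemma induced_connected (S : Set (Fin 10 ⊕ Fin 4)) (j : Fin 4) (hj : Sum.inr j ∈ Sᶜ) :
    (G19.induce Sᶜ).Connected := by
  rw [connected_iff]
  refine ⟨?_, ⟨⟨_, hj⟩⟩⟩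
  have step : ∀ u : ↥Sᶜ, (G19.induce Sᶜ).Reachable u ⟨Sum.inr j, hj⟩ := by
    intro u
    by_cases h : u = ⟨Sum.inr j, hj⟩
    · rw [h]
    · apply Adj.reachable
      have hne : (u : Fin 10 ⊕ Fin 4) ≠ Sum.inr j := by
        intro hh; exact h (Subtype.ext hh)
      exact adj_inr hne
  intro u w
  exact (step u).trans (step w).symm

lemma not_conn_rangeInr :
    ¬ (G19.induce (Set.range (Sum.inr : Fin 4 → Fin 10 ⊕ Fin 4))ᶜ).Connected := by
  intro h
  set T := (Set.range (Sum.inr : Fin 4 → Fin 10 ⊕ Fin 4))ᶜ with hT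
  have h0 : Sum.inl (0 : Fin 10) ∈ T := by simp [hT]
  have h2 : Sum.inl (2 : Fin 10) ∈ T := by simp [hT]
  obtain ⟨p⟩ := h.preconnected ⟨_, h0⟩ ⟨_, h2⟩
  have toInl : ∀ u : ↥T, ∃ a : Fin 10, (u : Fin 10 ⊕ Fin 4) = Sum.inl a := by
    intro u
    have hu := u.prop
    match hval : (u : Fin 10 ⊕ Fin 4) with
    | Sum.inl a => exact ⟨a, rfl⟩
    | Sum.inr j =>
      rw [hval] at hu
      exact absurd (Set.mem_range_self j) hu
  let pf : ↥T → ℕ := fun z => Sum.elim (fun k : Fin 10 => k.val / 2) (fun _ => 99) z.val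
  have inv : ∀ {u w : ↥T} (q : (G19.induce T).Walk u w), pf u = pf w := by
    intro u w q
    induction q with
    | nil => rfl
    | @cons u' v' w' hadj q ih =>
      refine Eq.trans ?_ ih
      obtain ⟨a, ha⟩ := toInl u'
      obtain ⟨b, hb⟩ := toInl v'
      have hadj' : G19.Adj (u' : Fin 10 ⊕ Fin 4) (v' : Fin 10 ⊕ Fin 4) := hadj
      rw [ha, hb, adj_inl_inl] at hadj'
      simp only [pf, ha, hb, Sum.elim_inl]
      exact hadj'.2
  have := inv p
  simp only [pf, Sum.elim_inl] at this
  norm_num at this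

lemma kappa4 : kappa G19 = 4 := by
  have hncard : (Set.range (Sum.inr : Fin 4 → Fin 10 ⊕ Fin 4)).ncard = 4 := by
    have he : Set.range (Sum.inr : Fin 4 → Fin 10 ⊕ Fin 4) =
        ↑(Finset.univ.image (Sum.inr : Fin 4 → Fin 10 ⊕ Fin 4)) := by
      ext z; simp
    rw [he, Set.ncard_coe_finset, Finset.card_image_of_injective _ Sum.inr_injective]
    simp
  have hmem : 4 ∈ {k | ∃ S : Set (Fin 10 ⊕ Fin 4), S.ncard = k ∧ IsCutSet G19 S} :=
    ⟨Set.range Sum.inr, hncard, Or.inl not_conn_rangeInr⟩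
  apply le_antisymm
  · exact Nat.sInf_le hmem
  · apply le_csInf ⟨4, hmem⟩
    rintro k ⟨S, rfl, hcut⟩
    by_contra hlt
    push_neg at hlt
    have hSfin : S.Finite := S.toFinite
    have hcompl : S.ncard + Sᶜ.ncard = 14 := by
      rw [Set.ncard_add_ncard_compl]
      simp [Nat.card_eq_fintype_card]
    obtain ⟨j, hj⟩ : ∃ j : Fin 4, Sum.inr j ∈ Sᶜ := by
      by_contra hc; push_neg at hc
      have hsub : Set.range (Sum.inr : Fin 4 → Fin 10 ⊕ Fin 4) ⊆ S := by
        rintro _ ⟨j, rfl⟩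
        have h := hc j
        rwa [Set.notMem_compl_iff] at h
      have := Set.ncard_le_ncard hsub hSfin
      omega
    rcases hcut with hnc | hss
    · exact hnc (induced_connected S j hj)
    · have h1 : Sᶜ.ncard ≤ 1 := (Set.ncard_le_one (Sᶜ.toFinite)).mpr
        (fun a ha b hb => hss ha hb)
      omega

/-- `5K₂ + K₄` is 4-connected with κ = 4 and δ = 5, has a cycle of
length exactly 4δ - 2κ = 12 but none of length ≥ 13, and has no dominating cycle. -/
theorem stmt19 :
    kappa G19 = 4 ∧ G19.minDegree = 5 ∧
    (∃ (x : Fin 10 ⊕ Fin 4) (C : G19.Walk x x), C.IsCycle ∧ C.length = 12) ∧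
    (∀ (x : Fin 10 ⊕ Fin 4) (C : G19.Walk x x), C.IsCycle → C.length < 13) ∧
    ¬ ∃ (x : Fin 10 ⊕ Fin 4) (C : G19.Walk x x), C.IsCycle ∧
        ∀ a b, a ∉ C.support → b ∉ C.support → ¬ G19.Adj a b := by
  refine ⟨kappa4, ?_, ⟨_, cyc12, cyc12_isCycle, cyc12_length⟩, ?_, ?_⟩
  · have h : ∀ (d : DecidableRel G19.Adj), @SimpleGraph.minDegree _ G19 _ d = 5 := by
      intro d
      have hd : d = decAdj := Subsingleton.elim _ _
      rw [hd]; exact minDeg5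
    exact h _
  · intro x C hC
    obtain ⟨v, hinj, hadj, _⟩ := cycle_to_fn C hC
    have := (cycle_struct hC.three_le_length v hinj hadj).1
    omega
  · rintro ⟨x, C, hC, hdom⟩
    obtain ⟨v, hinj, hadj, hsupp⟩ := cycle_to_fn C hC
    have hn3 := hC.three_le_length
    haveI : NeZero C.length := ⟨by omega⟩
    obtain ⟨h12, hpair⟩ := cycle_struct hn3 v hinj hadj
    by_cases hall : ∀ j : Fin 4, ∃ i, v i = Sum.inr j
    · obtain ⟨a, b, hne, hp, hna, hnb⟩ := hpair hall
      have hnsa : Sum.inl a ∉ C.support := fun hmem => by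
        obtain ⟨i, hi⟩ := hsupp _ hmem; exact hna i hi
      have hnsb : Sum.inl b ∉ C.support := fun hmem => by
        obtain ⟨i, hi⟩ := hsupp _ hmem; exact hnb i hi
      exact hdom _ _ hnsa hnsb (adj_inl_inl.mpr ⟨hne, hp⟩)
    · push_neg at hall
      obtain ⟨j, hj⟩ := hall
      have hjs : Sum.inr j ∉ C.support := fun hmem => by
        obtain ⟨i, hi⟩ := hsupp _ hmem; exact hj i hi
      have hcard : (Finset.univ.image v ∪ {Sum.inr j}).card ≤ 13 := by
        have hc1 : (Finset.univ.image v ∪ {Sum.inr j}).card ≤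
            (Finset.univ.image v).card + 1 := by
          refine le_trans (Finset.card_union_le _ _) ?_
          simp
        have hc2 : (Finset.univ.image v).card ≤ Fintype.card (ZMod C.length) :=
          le_trans (Finset.card_image_le) (by simp)
        rw [ZMod.card] at hc2
        omega
      obtain ⟨u, hu⟩ : ∃ u, u ∉ (Finset.univ.image v ∪ {Sum.inr j}) := by
        by_contra hcc; push_neg at hcc
        have hsub : (Finset.univ : Finset (Fin 10 ⊕ Fin 4)) ⊆
            (Finset.univ.image v ∪ {Sum.inr j}) := fun z _ => hcc z
        have hle := Finset.card_le_card hsub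
        simp only [Finset.card_univ] at hle
        have h14 : Fintype.card (Fin 10 ⊕ Fin 4) = 14 := by simp
        omega
      simp only [Finset.mem_union, Finset.mem_image, Finset.mem_singleton, not_or] at hu
      obtain ⟨hu1, hu2⟩ := hu
      have hus : u ∉ C.support := fun hmem => by
        obtain ⟨i, hi⟩ := hsupp _ hmem
        exact hu1 ⟨i, Finset.mem_univ i, hi⟩
      exact hdom u _ hus hjs (adj_inr hu2)
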